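/- Let N be a commutative group and E a type, let dil : N → E → E → E be a dilation structure which is injective as a map from N to binary operations on E (if dil a = dil b then a = b), and suppose ⋄ : N → N → N → N satisfies the (convex) axiom: for all c, a, b ∈ N, dil (⋄ c a b) = c^a (dil b) as binary operations on E, where c^a B := a − ((a − B)·(dil c)). Then ⋄ itself satisfies the dilation-calculus axioms on N: for all a, b, c, c' ∈ N, (id) ⋄ 1 a b = b; (act) ⋄ c a (⋄ c' a b) = ⋄ (c*c') a b; (R1) ⋄ c a a = a; and (R2) ⋄ c a (⋄ c⁻¹ a b) = b. -/
import Mathlib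


/-- Difference combinator: `(a − B) e x := B (dil a e x) (dil a⁻¹ (dil a e x) e)`. -/
def emDiff {N E : Type*} [CommGroup N] (dil : N → E → E → E) (a : N)
    (B : E → E → E) : E → E → E :=
  fun e x => B (dil a e x) (dil a⁻¹ (dil a e x) e)

/-- Product of binary operations: `(B·C) e x := B e (C e x)`. -/
def emProd {E : Type*} (B C : E → E → E) : E → E → E :=
  fun e x => B e (C e x)

/-- `c^a B := a − ((a − B)·(dil c))`. -/
def emCPow {N E : Type*} [CommGroup N] (dil : N → E → E → E) (c a : N)
    (B : E → E → E) : E → E → E :=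
  emDiff dil a (emProd (emDiff dil a B) (dil c))

theorem stmt_19 (N E : Type*) [CommGroup N] (dil : N → E → E → E)
    (hid : ∀ e x : E, dil 1 e x = x)
    (hact : ∀ (a b : N) (e x : E), dil a e (dil b e x) = dil (a * b) e x)
    (hR1 : ∀ (a : N) (x : E), dil a x x = x)
    (hext : ∀ a b : N, dil a = dil b → a = b)
    (conv : N → N → N → N)
    (hconv : ∀ c a b : N, dil (conv c a b) = emCPow dil c a (dil b)) :
    ∀ a b c c' : N,
      conv 1 a b = b ∧
      conv c a (conv c' a b) = conv (c * c') a b ∧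
      conv c a a = a ∧
      conv c a (conv c⁻¹ a b) = b := by
  have key : ∀ (a : N) (e x : E), dil a (dil a e x) (dil a⁻¹ (dil a e x) e) = e := by
    intro a e x
    rw [hact, mul_inv_cancel, hid]
  have hinv : ∀ (a : N) (B : E → E → E), emDiff dil a (emDiff dil a B) = B := by
    intro a B
    funext e x
    simp only [emDiff]
    rw [key a e x, hact, inv_mul_cancel, hid]
  have hidlem : ∀ a b : N, conv 1 a b = b := by
    intro a b
    apply hext
    rw [hconv]
    have : emProd (emDiff dil a (dil b)) (dil 1) = emDiff dil a (dil b) := by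
      funext e x; simp [emProd, hid]
    rw [emCPow, this, hinv a (dil b)]
  have hactlem : ∀ a b c c' : N, conv c a (conv c' a b) = conv (c * c') a b := by
    intro a b c c'
    apply hext
    have hp : ∀ (X : E → E → E), emProd (emProd X (dil c')) (dil c) = emProd X (dil (c * c')) := by
      intro X
      funext e x
      simp only [emProd]
      rw [hact, mul_comm c' c]
    rw [hconv, hconv, hconv]
    simp only [emCPow]
    rw [hinv, hp]
  intro a b c c'
  refine ⟨hidlem a b, hactlem a b c c', ?_, ?_⟩
  · apply hext
    rw [hconv]
    funext e x
    simp only [emCPow, emProd, emDiff]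
    rw [key]
  · rw [hactlem, mul_inv_cancel, hidlem]
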